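/- Let f : [0,1] → ℝ be a polynomial strictly positive on [0,1] with coefficients in a subfield K of ℝ, and a ≥ 1, b ≥ 1 integers. For each k ≥ 0, the residue at s = -(b+k)/a of the meromorphic continuation of ∫₀¹ f(t)^s t^(as+b-1) dt, which equals (1/(a·k!)) · (d^k/dt^k)[f^(-(b+k)/a)](0), is algebraic over K. -/

import Mathlib

open Polynomial Real

theorem stmt2 (K : Subfield ℝ) (f : Polynomial ℝ) (hfK : ∀ i, f.coeff i ∈ K)
    (hf : ∀ t ∈ Set.Icc (0:ℝ) 1, 0 < f.eval t)
    (a b : ℤ) (ha : 1 ≤ a) (hb : 1 ≤ b) (k : ℕ) :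
    ∃ P : Polynomial ℝ, P ≠ 0 ∧ (∀ i, P.coeff i ∈ K) ∧
      Polynomial.eval
        ((1 / ((a : ℝ) * (Nat.factorial k))) *
          iteratedDeriv k (fun t : ℝ => f.eval t ^ (-(((b : ℝ) + k) / (a : ℝ)))) 0) P = 0 := by
  set α : ℝ := -(((b : ℝ) + k) / (a : ℝ)) with hαdef
  set g : ℝ → ℝ := fun t => f.eval t ^ α with hgdef
  have haR : (1:ℝ) ≤ (a:ℝ) := by exact_mod_cast ha
  have haR0 : (a:ℝ) ≠ 0 := by linarith
  have hf0 : 0 < f.eval 0 := hf 0 (by norm_num)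
  have hαK : α ∈ K := by
    apply neg_mem; apply div_mem
    · exact add_mem (intCast_mem K b) (natCast_mem K k)
    · exact intCast_mem K a
  -- closure lemmas
  have mulK : ∀ p q : Polynomial ℝ, (∀ i, p.coeff i ∈ K) → (∀ i, q.coeff i ∈ K) →
      ∀ i, (p * q).coeff i ∈ K := by
    intro p q hp hq i
    rw [Polynomial.coeff_mul]
    exact sum_mem fun c _ => mul_mem (hp c.1) (hq c.2)
  have derK : ∀ p : Polynomial ℝ, (∀ i, p.coeff i ∈ K) →
      ∀ i, (derivative p).coeff i ∈ K := by
    intro p hp i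
    rw [Polynomial.coeff_derivative]
    exact mul_mem (hp _) (by exact_mod_cast natCast_mem K (i+1))
  -- main induction
  have main : ∀ m : ℕ, ∃ p : Polynomial ℝ, (∀ i, p.coeff i ∈ K) ∧
      ∀ t : ℝ, 0 < f.eval t → iteratedDeriv m g t = p.eval t * f.eval t ^ (α - m) := by
    intro m
    induction m with
    | zero =>
      refine ⟨1, fun i => ?_, fun t ht => by simp [g]⟩
      · rcases eq_or_ne i 0 with h | h <;> simp [Polynomial.coeff_one, h, one_mem, zero_mem]
    | succ m ih =>
      obtain ⟨p, hpK, hp⟩ := ih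
      refine ⟨derivative p * f + C (α - m) * (p * derivative f), fun i => ?_, fun t ht => ?_⟩
      · rw [Polynomial.coeff_add]
        apply add_mem (mulK _ _ (derK _ hpK) hfK i)
        apply mulK _ _ _ (mulK _ _ hpK (derK _ hfK)) i
        intro j
        rw [Polynomial.coeff_C]
        split
        · exact sub_mem hαK (natCast_mem K m)
        · exact zero_mem K
      · have hU : IsOpen {s : ℝ | 0 < f.eval s} :=
          isOpen_lt continuous_const f.continuous
        have hev : iteratedDeriv m g =ᶠ[nhds t]
            (fun s => p.eval s * f.eval s ^ (α - m)) :=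
          Filter.eventuallyEq_of_mem (hU.mem_nhds ht) (fun s hs => hp s hs)
        have h2 : HasDerivAt (fun s : ℝ => f.eval s ^ (α - m))
            ((α - m) * f.eval t ^ (α - m - 1) * (derivative f).eval t) t := by
          have := (Real.hasDerivAt_rpow_const (x := f.eval t) (p := α - m)
            (Or.inl ht.ne')).comp t (f.hasDerivAt t)
          simpa [Function.comp_def, mul_comm, mul_assoc, mul_left_comm] using this
        have h3 := (p.hasDerivAt t).fun_mul h2
        rw [iteratedDeriv_succ, hev.deriv_eq, h3.deriv]
        have hfe : f.eval t ^ (α - m) = f.eval t ^ (α - m - 1) * f.eval t := by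
          rw [Real.rpow_sub_one ht.ne']; field_simp
        have hc : α - (m : ℝ) - 1 = α - ((m : ℕ) + 1 : ℕ) := by push_cast; ring
        rw [hfe, ← hc]
        simp only [Polynomial.eval_add, Polynomial.eval_mul, Polynomial.eval_C]
        ring
  obtain ⟨p, hpK, hp⟩ := main k
  have hval : iteratedDeriv k g 0 = p.eval 0 * f.eval 0 ^ (α - k) := hp 0 hf0
  set c : ℝ := (1 / ((a : ℝ) * (Nat.factorial k))) * p.eval 0 with hcdef
  have hcK : c ∈ K := by
    apply mul_mem
    · apply div_mem (one_mem K)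
      exact mul_mem (intCast_mem K a) (natCast_mem K (Nat.factorial k))
    · -- p.eval 0 = p.coeff 0
      rw [← Polynomial.coeff_zero_eq_eval_zero]; exact hpK 0
  set n : ℕ := a.toNat with hndef
  have hnR : (n : ℝ) = (a : ℝ) := by
    rw [hndef]; exact_mod_cast Int.toNat_of_nonneg (by linarith : (0:ℤ) ≤ a)
  have hn1 : 1 ≤ n := by rw [hndef]; omega
  set M : ℤ := b + k + k * a with hMdef
  have hx : (f.eval 0 ^ (α - k)) ^ n = f.eval 0 ^ (-M : ℤ) := by
    rw [← Real.rpow_natCast (f.eval 0 ^ (α - k)) n, ← Real.rpow_mul hf0.le]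
    rw [← Real.rpow_intCast]
    congr 1
    rw [hnR, hαdef, hMdef]
    push_cast
    field_simp
    ring
  set v : ℝ := c * f.eval 0 ^ (α - k) with hvdef
  rcases eq_or_ne c 0 with hc0 | hc0
  · refine ⟨X, X_ne_zero, fun i => ?_, ?_⟩
    · rw [Polynomial.coeff_X]; split
      · exact one_mem K
      · exact zero_mem K
    · rw [hval]
      rw [show (1 / ((a : ℝ) * (Nat.factorial k))) * (p.eval 0 * f.eval 0 ^ (α - k))
        = c * f.eval 0 ^ (α - k) by rw [hcdef]; ring]
      simp [hc0]
  · refine ⟨X ^ n - C (c ^ n * f.eval 0 ^ (-M : ℤ)), ?_, fun i => ?_, ?_⟩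
    · exact Polynomial.X_pow_sub_C_ne_zero (by omega) _
    · rw [Polynomial.coeff_sub]
      apply sub_mem
      · rw [Polynomial.coeff_X_pow]; split
        · exact one_mem K
        · exact zero_mem K
      · rw [Polynomial.coeff_C]; split
        · refine mul_mem (pow_mem hcK n) (zpow_mem ?_ _)
          rw [← Polynomial.coeff_zero_eq_eval_zero]; exact hfK 0
        · exact zero_mem K
    · rw [hval]
      rw [show (1 / ((a : ℝ) * (Nat.factorial k))) * (p.eval 0 * f.eval 0 ^ (α - k))
        = c * f.eval 0 ^ (α - k) by rw [hcdef]; ring]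
      simp only [Polynomial.eval_sub, Polynomial.eval_pow, Polynomial.eval_X,
        Polynomial.eval_C]
      rw [mul_pow, hx]
      ring
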